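/- (Momentum formula of Theorem 1, verification form.) Fix a > b > 0, 𝔥 > 0 and E > 0, and set γ² = E·𝔥. Let δ, α, β be the bank constants and let g : I → ℝ be differentiable with g′(p)² = 4g(p)³ − αg(p) − β and g(p) + δ − a > 0 for all p ∈ I. Then for every p ∈ I, the quantities ρ := √(g(p) + δ − a) and u := −(1/2)·√E·g′(p)/((g(p) + δ − a + b)·√(g(p) + δ − a)) satisfy the energy relation (u² + γ²/ρ²)·(ρ² + b)/(ρ² + a) = E; that is, the momentum formula of Theorem 1 (with E = (ξ² + b)/(ξ² + a)) is consistent with conservation of the Hamiltonian ℋ = √(u² + γ²/ρ²)·√((ρ² + b)/(ρ² + a)). -/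

import Mathlib

/-- The bank constant `δ = (𝔥 + 2a − b)/3`. -/
noncomputable def bankDelta (a b 𝔥 : ℝ) : ℝ := (𝔥 + 2 * a - b) / 3

/-- The bank constant `α = (4/3)(𝔥² − 2(a − 2b)𝔥 + a² − ab + b²)`. -/
noncomputable def bankAlpha (a b 𝔥 : ℝ) : ℝ :=
  (4 / 3) * (𝔥 ^ 2 - 2 * (a - 2 * b) * 𝔥 + a ^ 2 - a * b + b ^ 2)

/-- The bank constant
`β = (4/27)(𝔥 − a + 2b)(2𝔥² − 4(a − 2b)𝔥 + (2a − b)(a + b))`. -/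
noncomputable def bankBeta (a b 𝔥 : ℝ) : ℝ :=
  (4 / 27) * (𝔥 - a + 2 * b) * (2 * 𝔥 ^ 2 - 4 * (a - 2 * b) * 𝔥 + (2 * a - b) * (a + b))

/-- (Momentum formula of Theorem 1, verification form.)
Fix `a > b > 0`, `𝔥 > 0`, `E > 0`, set `γ² = E·𝔥`, and let `δ, α, β` be the
bank constants.  Let `g : I → ℝ` be differentiable with
`g′(p)² = 4g(p)³ − αg(p) − β` and `g(p) + δ − a > 0` on `I`.  Then for every
`p ∈ I`, the quantities `ρ := √(g(p) + δ − a)` and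
`u := −(1/2)·√E·g′(p)/((g(p) + δ − a + b)·√(g(p) + δ − a))` satisfy the
energy relation `(u² + γ²/ρ²)·(ρ² + b)/(ρ² + a) = E`. -/
theorem bank_momentum_verification
    (a b 𝔥 E γ : ℝ) (hb : 0 < b) (hab : b < a) (h𝔥 : 0 < 𝔥) (hE : 0 < E)
    (hγ : γ ^ 2 = E * 𝔥)
    (I : Set ℝ) (hI : I.OrdConnected)
    (g : ℝ → ℝ)
    (hgdiff : ∀ p ∈ I, DifferentiableAt ℝ g p)
    (hgode : ∀ p ∈ I,
      (deriv g p) ^ 2 = 4 * (g p) ^ 3 - bankAlpha a b 𝔥 * g p - bankBeta a b 𝔥)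
    (hgpos : ∀ p ∈ I, 0 < g p + bankDelta a b 𝔥 - a) :
    ∀ p ∈ I,
      let ρ : ℝ := Real.sqrt (g p + bankDelta a b 𝔥 - a)
      let u : ℝ := -(1 / 2) * Real.sqrt E * deriv g p
        / ((g p + bankDelta a b 𝔥 - a + b) * Real.sqrt (g p + bankDelta a b 𝔥 - a))
      (u ^ 2 + γ ^ 2 / ρ ^ 2) * (ρ ^ 2 + b) / (ρ ^ 2 + a) = E := by
  intro p hp ρ u
  have hS : 0 < g p + bankDelta a b 𝔥 - a := hgpos p hp
  have hρ2 : ρ ^ 2 = g p + bankDelta a b 𝔥 - a := Real.sq_sqrt hS.le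
  have hE2 : Real.sqrt E ^ 2 = E := Real.sq_sqrt hE.le
  have hode := hgode p hp
  set S : ℝ := g p + bankDelta a b 𝔥 - a with hSdef
  have hSb : S + b ≠ 0 := by positivity
  have hSa : S + a ≠ 0 := by nlinarith
  have hS0 : S ≠ 0 := ne_of_gt hS
  have hu : u ^ 2 = (1 / 4) * E * (deriv g p) ^ 2 / ((S + b) ^ 2 * S) := by
    show (-(1 / 2) * Real.sqrt E * deriv g p / ((S + b) * ρ)) ^ 2 = _
    rw [div_pow, mul_pow, mul_pow, mul_pow, hρ2, hE2]
    ring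
  rw [hu, hρ2, hγ]
  have hg : g p = S + a - bankDelta a b 𝔥 := by rw [hSdef]; ring
  rw [hg] at hode
  clear_value u ρ S
  field_simp
  simp only [bankAlpha, bankBeta, bankDelta] at hode ⊢
  linear_combination hode
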